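/- Let Err be a set of at most d−1 two-qubit X-error events, where each event places at most one X-error in some primal layer Q^Z_i and at most one X-error in the corresponding dual layer Q^X_i of the distance-d toric code. Then the total resulting X-error is not equivalent (modulo X-stabilizers) to either nontrivial X-logical X̄^(1) or X̄^(2) or their product: any X-logical representative must have support in all d primal layers (for X̄^(1)) or all d dual layers (for X̄^(2)), while the error has support in at most d−1 primal layers and at most d−1 dual layers. -/

import Mathlib

open Matrix Finset

/-- The cyclic shift matrix `C`. -/
def shiftC (d : ℕ) [NeZero d] : Matrix (Fin d) (Fin d) (ZMod 2) :=
  Matrix.of fun i j => if j = i + 1 then 1 else 0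

/-- The cyclic repetition-code check matrix `H_C = I + C`. -/
def HCm (d : ℕ) [NeZero d] : Matrix (Fin d) (Fin d) (ZMod 2) :=
  1 + shiftC d

/-- Toric-code qubits: primal layers `Q^Z_i` (left) and dual layers `Q^X_i` (right). -/
abbrev ToricQubit (d : ℕ) := (Fin d × Fin d) ⊕ (Fin d × Fin d)

/-- `X`-check `a ∈ C^X_i`. -/
def xCheck (d : ℕ) [NeZero d] (i a : Fin d) : ToricQubit d → ZMod 2 :=
  fun q =>
    match q with
    | Sum.inl (l, j) => if l = i then HCm d a j else 0
    | Sum.inr (l, j) =>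
        (if l = i ∧ j = a then 1 else 0) + (if l + 1 = i ∧ j = a then 1 else 0)

/-- Representative of `X̄^(1)`: one qubit (column `0`) in each primal layer. -/
def x1vec (d : ℕ) [NeZero d] : ToricQubit d → ZMod 2 :=
  fun q => match q with
    | Sum.inl (_, j) => if j = 0 then 1 else 0
    | Sum.inr _ => 0

/-- Representative of `X̄^(2)`: all of the dual layer `Q^X_0`. -/
def x2vec (d : ℕ) [NeZero d] : ToricQubit d → ZMod 2 :=
  fun q => match q with
    | Sum.inl _ => 0
    | Sum.inr (l, _) => if l = 0 then 1 else 0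

/-- Span of the `X`-checks. -/
def xSpan (d : ℕ) [NeZero d] : Submodule (ZMod 2) (ToricQubit d → ZMod 2) :=
  Submodule.span (ZMod 2) (Set.range fun p : Fin d × Fin d => xCheck d p.1 p.2)

lemma sum_row_HCm (d : ℕ) [NeZero d] (a : Fin d) : ∑ j, HCm d a j = 0 := by
  have : ∀ j, HCm d a j = (if a = j then (1:ZMod 2) else 0) + (if j = a + 1 then 1 else 0) := by
    intro j; simp [HCm, shiftC, Matrix.add_apply, Matrix.one_apply]
  simp only [this, Finset.sum_add_distrib, Finset.sum_ite_eq, Finset.sum_ite_eq',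
    Finset.mem_univ, if_true]
  decide

lemma sum_xCheck_inl (d : ℕ) [NeZero d] (i' a i : Fin d) :
    ∑ j, xCheck d i' a (Sum.inl (i, j)) = 0 := by
  simp only [xCheck]
  by_cases h : i = i'
  · simp [h, sum_row_HCm]
  · simp [h]

lemma sum_xCheck_inr (d : ℕ) [NeZero d] (i' a j : Fin d) :
    ∑ l, xCheck d i' a (Sum.inr (l, j)) = 0 := by
  simp only [xCheck]
  rw [Finset.sum_add_distrib]
  have h1 : ∑ l : Fin d, (if l = i' ∧ j = a then (1:ZMod 2) else 0)
      = if j = a then 1 else 0 := by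
    by_cases h : j = a <;> simp [h]
  have h2 : ∑ l : Fin d, (if l + 1 = i' ∧ j = a then (1:ZMod 2) else 0)
      = if j = a then 1 else 0 := by
    by_cases h : j = a
    · simp only [h, and_true]
      rw [Finset.sum_eq_single (i' - 1)]
      · simp
      · intro b _ hb
        rw [if_neg]
        intro hb1
        exact hb (by rw [← hb1]; exact (add_sub_cancel_right b 1).symm)
      · simp
    · simp [h]
  rw [h1, h2]
  by_cases h : j = a <;> simp [h]
  decide

lemma span_sum_inl (d : ℕ) [NeZero d] {sx : ToricQubit d → ZMod 2} (hsx : sx ∈ xSpan d)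
    (i : Fin d) : ∑ j, sx (Sum.inl (i, j)) = 0 := by
  induction hsx using Submodule.span_induction with
  | mem x hx => obtain ⟨p, rfl⟩ := hx; exact sum_xCheck_inl d p.1 p.2 i
  | zero => simp
  | add x y _ _ hx hy => simp [Finset.sum_add_distrib, hx, hy]
  | smul c x _ hx => simp [smul_eq_mul, ← Finset.mul_sum, hx]

lemma span_sum_inr (d : ℕ) [NeZero d] {sx : ToricQubit d → ZMod 2} (hsx : sx ∈ xSpan d)
    (j : Fin d) : ∑ l, sx (Sum.inr (l, j)) = 0 := by
  induction hsx using Submodule.span_induction with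
  | mem x hx => obtain ⟨p, rfl⟩ := hx; exact sum_xCheck_inr d p.1 p.2 j
  | zero => simp
  | add x y _ _ hx hy => simp [Finset.sum_add_distrib, hx, hy]
  | smul c x _ hx => simp [smul_eq_mul, ← Finset.mul_sum, hx]

/-- Let at most `d − 1` two-qubit `X`-error events occur, event `t`
placing at most one `X`-error (at optional column `perr t`) in the primal layer
`layer t` and at most one (at optional column `derr t`) in the corresponding dual layer.
Then the total error is not equivalent modulo `X`-stabilizers to any nontrivial
`X`-logical (`X̄^(1)`, `X̄^(2)`, or their product). -/
theorem few_faults_detectable (d : ℕ) [NeZero d] (k : ℕ) (hk : k < d)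
    (layer : Fin k → Fin d) (perr derr : Fin k → Option (Fin d)) :
    ∀ sx ∈ xSpan d, ∀ a b : ZMod 2, ¬(a = 0 ∧ b = 0) →
      (fun q : ToricQubit d =>
        ∑ t : Fin k,
          (match q with
           | Sum.inl (l, j) => if l = layer t ∧ perr t = some j then (1 : ZMod 2) else 0
           | Sum.inr (l, j) => if l = layer t ∧ derr t = some j then (1 : ZMod 2) else 0))
        ≠ a • x1vec d + b • x2vec d + sx := by
  intro sx hsx a b hab heq
  apply hab
  constructor
  · -- a = 0
    obtain ⟨i, hi⟩ : ∃ i : Fin d, ∀ t, layer t ≠ i := by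
      by_contra h
      push_neg at h
      have := Fintype.card_le_of_surjective layer fun i => by
        obtain ⟨t, ht⟩ := h i; exact ⟨t, ht⟩
      simp at this; omega
    have key := congrArg (fun v : ToricQubit d → ZMod 2 => ∑ j, v (Sum.inl (i, j))) heq
    simp only [Pi.add_apply, Pi.smul_apply, x1vec, x2vec, smul_eq_mul, mul_zero, add_zero,
      mul_ite, mul_one, Finset.sum_add_distrib] at key
    rw [Finset.sum_ite_eq' Finset.univ (0 : Fin d) (fun _ => a)] at key
    rw [span_sum_inl d hsx i] at key
    simp only [Finset.mem_univ, if_true, add_zero] at key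
    rw [← key]
    refine Finset.sum_eq_zero fun j _ => Finset.sum_eq_zero fun t _ => ?_
    rw [if_neg]
    rintro ⟨h1, -⟩
    exact hi t h1.symm
  · -- b = 0
    obtain ⟨j0, hj⟩ : ∃ j0 : Fin d, ∀ t, derr t ≠ some j0 := by
      by_contra h
      push_neg at h
      have := Fintype.card_le_of_surjective (fun t => (derr t).getD 0) fun j => by
        obtain ⟨t, ht⟩ := h j; exact ⟨t, by simp [ht]⟩
      simp at this; omega
    have key := congrArg (fun v : ToricQubit d → ZMod 2 => ∑ l, v (Sum.inr (l, j0))) heq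
    simp only [Pi.add_apply, Pi.smul_apply, x1vec, x2vec, smul_eq_mul, mul_zero, zero_add,
      mul_ite, mul_one, Finset.sum_add_distrib] at key
    rw [Finset.sum_ite_eq' Finset.univ (0 : Fin d) (fun _ => b)] at key
    rw [span_sum_inr d hsx j0] at key
    simp only [Finset.mem_univ, if_true, add_zero] at key
    rw [← key]
    refine Finset.sum_eq_zero fun l _ => Finset.sum_eq_zero fun t _ => ?_
    rw [if_neg]
    rintro ⟨-, h2⟩
    exact hj t h2
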